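/- (Reconstructor stability.) Let D and D̃ be dictionaries with ‖D − D̃‖_{1,2} ≤ λ, let a* be a minimizer of the LASSO objective for D at x and ã* a minimizer of the LASSO objective for D̃ at x. Then ‖D a* − D ã*‖_2² ≤ 2 ( 3‖x‖_2² + 9‖x‖_2 + 2 ) ‖x‖_2² · ‖D − D̃‖_{1,2} / λ. -/

import Mathlib

open Finset Matrix

noncomputable def norm2 {ι : Type*} [Fintype ι] (v : ι → ℝ) : ℝ :=
  Real.sqrt (∑ i, v i ^ 2)

noncomputable def norm1 {ι : Type*} [Fintype ι] (v : ι → ℝ) : ℝ :=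
  ∑ i, |v i|

noncomputable def norm0 {ι : Type*} (v : ι → ℝ) : ℕ :=
  Set.ncard {i | v i ≠ 0}

noncomputable def dot {ι : Type*} [Fintype ι] (u v : ι → ℝ) : ℝ :=
  ∑ i, u i * v i

def col {d m : ℕ} (D : Matrix (Fin d) (Fin m) ℝ) (i : Fin m) : Fin d → ℝ :=
  fun r => D r i

def IsDictionary {d m : ℕ} (D : Matrix (Fin d) (Fin m) ℝ) : Prop :=
  ∀ i, norm2 (_root_.col D i) = 1

noncomputable def norm12 {d m : ℕ} (E : Matrix (Fin d) (Fin m) ℝ) : ℝ :=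
  ⨆ i : Fin m, norm2 (_root_.col E i)

noncomputable def lassoObj {d m : ℕ} (lam : ℝ) (D : Matrix (Fin d) (Fin m) ℝ)
    (x : Fin d → ℝ) (z : Fin m → ℝ) : ℝ :=
  (1/2) * (norm2 (x - D.mulVec z))^2 + lam * norm1 z

def IsLassoMin {d m : ℕ} (lam : ℝ) (D : Matrix (Fin d) (Fin m) ℝ)
    (x : Fin d → ℝ) (a : Fin m → ℝ) : Prop :=
  ∀ z, lassoObj lam D x a ≤ lassoObj lam D x z

def Incoherent {d m : ℕ} (mu : ℝ) (D : Matrix (Fin d) (Fin m) ℝ) : Prop :=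
  ∀ i j, i ≠ j → |dot (_root_.col D i) (_root_.col D j)| ≤ mu / Real.sqrt d

noncomputable def kMargin {d m : ℕ} (lam : ℝ) (k : ℕ) (D : Matrix (Fin d) (Fin m) ℝ)
    (x : Fin d → ℝ) (a : Fin m → ℝ) : ℝ :=
  ⨆ I : {I : Finset (Fin m) // I.card = m - k},
    ⨅ j : {j : Fin m // j ∈ I.1}, (lam - |dot (_root_.col D j.1) (x - D.mulVec a)|)

/- ## Auxiliary lemmas -/

lemma sq_norm2 {ι : Type*} [Fintype ι] (v : ι → ℝ) : (norm2 v)^2 = ∑ i, v i ^ 2 :=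
  Real.sq_sqrt (Finset.sum_nonneg fun _ _ => sq_nonneg _)

lemma norm2_nonneg' {ι : Type*} [Fintype ι] (v : ι → ℝ) : 0 ≤ norm2 v :=
  Real.sqrt_nonneg _

lemma norm1_nonneg' {ι : Type*} [Fintype ι] (v : ι → ℝ) : 0 ≤ norm1 v :=
  Finset.sum_nonneg fun _ _ => abs_nonneg _

lemma norm2_eq_norm {ι : Type*} [Fintype ι] (v : ι → ℝ) :
    norm2 v = ‖(WithLp.equiv 2 (ι → ℝ)).symm v‖ := by
  rw [EuclideanSpace.norm_eq]
  simp [norm2, Real.norm_eq_abs, sq_abs]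

lemma norm2_add_le {ι : Type*} [Fintype ι] (u v : ι → ℝ) :
    norm2 (u + v) ≤ norm2 u + norm2 v := by
  simp only [norm2_eq_norm, WithLp.equiv_symm_apply, WithLp.toLp_add]
  exact norm_add_le _ _

lemma norm2_smul' {ι : Type*} [Fintype ι] (c : ℝ) (v : ι → ℝ) :
    norm2 (c • v) = |c| * norm2 v := by
  simp only [norm2_eq_norm, WithLp.equiv_symm_apply, WithLp.toLp_smul]
  rw [norm_smul, Real.norm_eq_abs]

lemma norm2_sub_comm {ι : Type*} [Fintype ι] (u v : ι → ℝ) :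
    norm2 (u - v) = norm2 (v - u) := by
  simp only [norm2_eq_norm, WithLp.equiv_symm_apply, WithLp.toLp_sub]
  exact norm_sub_rev _ _

lemma norm2_sum_le {ι κ : Type*} [Fintype ι] [Fintype κ] (f : κ → ι → ℝ) :
    norm2 (∑ j, f j) ≤ ∑ j, norm2 (f j) := by
  simp only [norm2_eq_norm]
  rw [show (WithLp.equiv 2 (ι → ℝ)).symm (∑ j, f j)
      = ∑ j, (WithLp.equiv 2 (ι → ℝ)).symm (f j) from
    map_sum (WithLp.linearEquiv 2 ℝ (ι → ℝ)).symm f Finset.univ]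
  exact norm_sum_le _ _

lemma norm2_le_add_sub {ι : Type*} [Fintype ι] (u v : ι → ℝ) :
    norm2 u ≤ norm2 v + norm2 (u - v) := by
  have h := norm2_add_le v (u - v)
  simpa using h

lemma sq_sub_sq_le {ι : Type*} [Fintype ι] (u v : ι → ℝ) :
    (norm2 u)^2 - (norm2 v)^2 ≤ norm2 (u - v) * (norm2 u + norm2 v) := by
  have h := norm2_le_add_sub u v
  nlinarith [norm2_nonneg' u, norm2_nonneg' v, norm2_nonneg' (u - v)]

lemma col_le_norm12 {d m : ℕ} (E : Matrix (Fin d) (Fin m) ℝ) (i : Fin m) :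
    norm2 (_root_.col E i) ≤ norm12 E := by
  have h := le_ciSup (f := fun i => norm2 (_root_.col E i))
    (Set.Finite.bddAbove (Set.finite_range _)) i
  simpa [norm12] using h

lemma norm12_nonneg' {d m : ℕ} (E : Matrix (Fin d) (Fin m) ℝ) : 0 ≤ norm12 E := by
  rcases isEmpty_or_nonempty (Fin m) with h | h
  · simp [norm12, ciSup_of_empty, Real.sSup_empty]
  · exact le_trans (norm2_nonneg' (_root_.col E h.some)) (col_le_norm12 E h.some)

lemma mulVec_eq_sum' {d m : ℕ} (E : Matrix (Fin d) (Fin m) ℝ) (z : Fin m → ℝ) :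
    E.mulVec z = ∑ j, z j • _root_.col E j := by
  funext i
  simp [Matrix.mulVec, dotProduct, _root_.col, Finset.sum_apply, mul_comm]

lemma norm2_mulVec_le {d m : ℕ} (E : Matrix (Fin d) (Fin m) ℝ) (z : Fin m → ℝ) :
    norm2 (E.mulVec z) ≤ norm12 E * norm1 z := by
  rw [mulVec_eq_sum']
  calc norm2 (∑ j, z j • _root_.col E j) ≤ ∑ j, norm2 (z j • _root_.col E j) := norm2_sum_le _
    _ = ∑ j, |z j| * norm2 (_root_.col E j) := by simp [norm2_smul']
    _ ≤ ∑ j, |z j| * norm12 E :=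
        Finset.sum_le_sum fun j _ =>
          mul_le_mul_of_nonneg_left (col_le_norm12 E j) (abs_nonneg _)
    _ = norm12 E * norm1 z := by rw [norm1, ← Finset.sum_mul, mul_comm]

/-- Core arithmetic estimate for one perturbation term. -/
lemma term_bound (lam eps N nu nv w X : ℝ) (hlam : 0 < lam) (heps : 0 ≤ eps)
    (hel : eps ≤ lam) (hN : 0 ≤ N) (hNX : lam * N ≤ X^2/2) (hnv : nv ≤ X)
    (hnu : nu ≤ nv + w) (hw : w ≤ eps * N) (hw0 : 0 ≤ w)
    (hnv0 : 0 ≤ nv) (hnu0 : 0 ≤ nu) (hX : 0 ≤ X)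
    (hsq : nu^2 - nv^2 ≤ w * (nu + nv)) :
    lam * (nu^2 - nv^2) ≤ eps * X^3 + eps * X^4 / 4 := by
  have hA : nu + nv ≤ (X + eps * N) + X := by linarith
  have h1 : w * (nu + nv) ≤ (eps * N) * ((X + eps * N) + X) :=
    mul_le_mul hw hA (by linarith) (by positivity)
  have h2 : lam * (eps * N) ≤ eps * (X^2/2) := by nlinarith
  have h3 : eps * N ≤ X^2/2 := by nlinarith
  have h4 : lam * (nu^2 - nv^2) ≤ lam * (w * (nu + nv)) :=
    mul_le_mul_of_nonneg_left hsq hlam.le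
  have h5 : lam * (w * (nu + nv)) ≤ lam * ((eps * N) * ((X + eps * N) + X)) :=
    mul_le_mul_of_nonneg_left h1 hlam.le
  have h6 : (eps * N) * (lam * (eps * N)) ≤ (X^2/2) * (eps * (X^2/2)) :=
    mul_le_mul h3 h2 (by positivity) (by positivity)
  have h7 : (2*X) * (lam * (eps * N)) ≤ (2*X) * (eps * (X^2/2)) :=
    mul_le_mul_of_nonneg_left h2 (by linarith)
  nlinarith [h4, h5, h6, h7, sq_nonneg (eps*N), sq_nonneg X]

/-- Reconstructor stability. -/
theorem reconstructor_stability {d m : ℕ} (lam : ℝ) (hlam : 0 < lam)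
    (D Dt : Matrix (Fin d) (Fin m) ℝ) (hD : IsDictionary D) (hDt : IsDictionary Dt)
    (hclose : norm12 (D - Dt) ≤ lam) (x : Fin d → ℝ)
    (a at' : Fin m → ℝ) (ha : IsLassoMin lam D x a) (hat : IsLassoMin lam Dt x at') :
    (norm2 (D.mulVec a - D.mulVec at'))^2
      ≤ 2 * (3 * (norm2 x)^2 + 9 * norm2 x + 2) * (norm2 x)^2 * norm12 (D - Dt) / lam := by
  set X := norm2 x with hXdef
  set eps := norm12 (D - Dt) with hepsdef
  have hX0 : 0 ≤ X := norm2_nonneg' x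
  have heps0 : 0 ≤ eps := norm12_nonneg' _
  -- value at zero
  have hf0 : lassoObj lam D x (0 : Fin m → ℝ) = (1/2) * X^2 := by
    simp [lassoObj, norm1, Matrix.mulVec_zero, hXdef]
  have hf0t : lassoObj lam Dt x (0 : Fin m → ℝ) = (1/2) * X^2 := by
    simp [lassoObj, norm1, Matrix.mulVec_zero, hXdef]
  have hfa : lassoObj lam D x a ≤ (1/2) * X^2 := hf0 ▸ ha 0
  have hfat : lassoObj lam Dt x at' ≤ (1/2) * X^2 := hf0t ▸ hat 0
  -- ℓ¹ bounds
  have hNa : lam * norm1 a ≤ X^2 / 2 := by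
    have h1 : 0 ≤ (norm2 (x - D.mulVec a))^2 := sq_nonneg _
    rw [lassoObj] at hfa; linarith
  have hNat : lam * norm1 at' ≤ X^2 / 2 := by
    have h1 : 0 ≤ (norm2 (x - Dt.mulVec at'))^2 := sq_nonneg _
    rw [lassoObj] at hfat; linarith
  -- residual bounds
  have hva : norm2 (x - D.mulVec a) ≤ X := by
    have h2 : (norm2 (x - D.mulVec a))^2 ≤ X^2 := by
      have h1 : 0 ≤ lam * norm1 a := mul_nonneg hlam.le (norm1_nonneg' a)
      rw [lassoObj] at hfa; linarith
    nlinarith [norm2_nonneg' (x - D.mulVec a)]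
  have hvat : norm2 (x - Dt.mulVec at') ≤ X := by
    have h2 : (norm2 (x - Dt.mulVec at'))^2 ≤ X^2 := by
      have h1 : 0 ≤ lam * norm1 at' := mul_nonneg hlam.le (norm1_nonneg' at')
      rw [lassoObj] at hfat; linarith
    nlinarith [norm2_nonneg' (x - Dt.mulVec at')]
  -- perturbation bound
  have hE : ∀ z : Fin m → ℝ, norm2 (D.mulVec z - Dt.mulVec z) ≤ eps * norm1 z := by
    intro z
    rw [← Matrix.sub_mulVec]
    exact norm2_mulVec_le _ z
  -- strong convexity at the midpoint
  set mid : Fin m → ℝ := (2⁻¹ : ℝ) • (a + at') with hmiddef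
  have hmidvec : D.mulVec mid = (2⁻¹ : ℝ) • (D.mulVec a + D.mulVec at') := by
    rw [hmiddef, Matrix.mulVec_smul, Matrix.mulVec_add]
  have hQmid : (norm2 (x - D.mulVec mid))^2
      = (norm2 (x - D.mulVec a))^2/2 + (norm2 (x - D.mulVec at'))^2/2
        - (norm2 (D.mulVec a - D.mulVec at'))^2/4 := by
    simp only [sq_norm2, hmidvec]
    have hpt : ∀ i, (x - (2⁻¹ : ℝ) • (D.mulVec a + D.mulVec at')) i ^ 2
        = (x - D.mulVec a) i ^2 / 2 + (x - D.mulVec at') i ^2 / 2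
          - (D.mulVec a - D.mulVec at') i ^2 / 4 := by
      intro i
      simp only [Pi.sub_apply, Pi.smul_apply, Pi.add_apply, smul_eq_mul]
      ring
    rw [Finset.sum_congr rfl (fun i _ => hpt i), Finset.sum_sub_distrib,
      Finset.sum_add_distrib, ← Finset.sum_div, ← Finset.sum_div, ← Finset.sum_div]
  have hN1mid : norm1 mid ≤ (norm1 a + norm1 at') / 2 := by
    have hpt : ∀ j, |mid j| ≤ (|a j| + |at' j|) / 2 := by
      intro j
      have h1 : |mid j| = |a j + at' j| / 2 := by
        simp only [hmiddef, Pi.smul_apply, Pi.add_apply, smul_eq_mul, abs_mul]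
        rw [abs_of_pos (by norm_num : (0:ℝ) < 2⁻¹)]
        ring
      rw [h1]
      have := abs_add_le (a j) (at' j)
      linarith
    calc norm1 mid ≤ ∑ j, (|a j| + |at' j|) / 2 := Finset.sum_le_sum fun j _ => hpt j
      _ = (norm1 a + norm1 at') / 2 := by
          rw [← Finset.sum_div, Finset.sum_add_distrib, norm1, norm1]
  have hS : (norm2 (D.mulVec a - D.mulVec at'))^2
      ≤ 4 * (lassoObj lam D x at' - lassoObj lam D x a) := by
    have h1 := ha mid
    simp only [lassoObj] at h1 ⊢
    rw [hQmid] at h1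
    have h2 : lam * norm1 mid ≤ lam * ((norm1 a + norm1 at') / 2) :=
      mul_le_mul_of_nonneg_left hN1mid hlam.le
    linarith
  -- perturbation of objectives
  have hterm1 : lam * ((norm2 (x - D.mulVec at'))^2 - (norm2 (x - Dt.mulVec at'))^2)
      ≤ eps * X^3 + eps * X^4 / 4 := by
    have hwub : norm2 ((x - D.mulVec at') - (x - Dt.mulVec at')) ≤ eps * norm1 at' := by
      have he : (x - D.mulVec at') - (x - Dt.mulVec at')
          = Dt.mulVec at' - D.mulVec at' := by funext i; simp only [Pi.sub_apply]; ring
      rw [he, norm2_sub_comm]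
      exact hE at'
    exact term_bound lam eps (norm1 at') _ _ _ X hlam heps0 hclose (norm1_nonneg' _)
      hNat hvat (norm2_le_add_sub _ _) hwub (norm2_nonneg' _) (norm2_nonneg' _)
      (norm2_nonneg' _) hX0 (sq_sub_sq_le _ _)
  have hterm2 : lam * ((norm2 (x - Dt.mulVec a))^2 - (norm2 (x - D.mulVec a))^2)
      ≤ eps * X^3 + eps * X^4 / 4 := by
    have hwub : norm2 ((x - Dt.mulVec a) - (x - D.mulVec a)) ≤ eps * norm1 a := by
      have he : (x - Dt.mulVec a) - (x - D.mulVec a)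
          = D.mulVec a - Dt.mulVec a := by funext i; simp only [Pi.sub_apply]; ring
      rw [he]
      exact hE a
    exact term_bound lam eps (norm1 a) _ _ _ X hlam heps0 hclose (norm1_nonneg' _)
      hNa hva (norm2_le_add_sub _ _) hwub (norm2_nonneg' _) (norm2_nonneg' _)
      (norm2_nonneg' _) hX0 (sq_sub_sq_le _ _)
  -- combine
  have hmidt : lassoObj lam Dt x at' - lassoObj lam Dt x a ≤ 0 := by
    have := hat a; linarith
  have hdiff : lam * (lassoObj lam D x at' - lassoObj lam D x a)
      ≤ eps * X^3 + eps * X^4 / 4 + (eps * X^3 + eps * X^4 / 4) := by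
    have hsplit : lassoObj lam D x at' - lassoObj lam D x a
        = ((1/2) * ((norm2 (x - D.mulVec at'))^2 - (norm2 (x - Dt.mulVec at'))^2))
          + (lassoObj lam Dt x at' - lassoObj lam Dt x a)
          + ((1/2) * ((norm2 (x - Dt.mulVec a))^2 - (norm2 (x - D.mulVec a))^2)) := by
      simp only [lassoObj]; ring
    have hmul : lam * (lassoObj lam Dt x at' - lassoObj lam Dt x a) ≤ 0 :=
      mul_nonpos_of_nonneg_of_nonpos hlam.le hmidt
    rw [hsplit]
    nlinarith [hterm1, hterm2, hmul]
  rw [le_div_iff₀ hlam]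
  have hSlam : (norm2 (D.mulVec a - D.mulVec at'))^2 * lam
      ≤ 4 * (lam * (lassoObj lam D x at' - lassoObj lam D x a)) := by
    have := mul_le_mul_of_nonneg_left hS hlam.le
    linarith [this]
  linarith [hSlam, hdiff, mul_nonneg heps0 (pow_nonneg hX0 2),
    mul_nonneg heps0 (pow_nonneg hX0 3), mul_nonneg heps0 (pow_nonneg hX0 4)]
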